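/- The R-module homomorphism φ : R[G] → M_R determined by g ↦ {g·0, g·∞} = {gσ⟨T⟩, g⟨T⟩} is surjective, and its kernel is R[G]N_σ + R[G]N_τ. -/

import Mathlib

noncomputable section

variable (R : Type*) [CommRing R] {G : Type*} [Group G]

/-- `N_g = 1 + g + ⋯ + g^(m-1) ∈ R[G]` for an element `g` of finite order `m`. -/
def Nelt (g : G) : MonoidAlgebra R G :=
  ∑ i ∈ Finset.range (orderOf g), MonoidAlgebra.of R G (g ^ i)

/-- The cusp set `G(∞)`, identified with the coset space `G/⟨T⟩` via `g∞ ↦ g⟨T⟩`. -/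
abbrev CuspSet (T : G) := G ⧸ Subgroup.zpowers T

/-- The submodule of relations defining the modular symbols module: it is generated by the
elements `{α,α}` and `{α,β} + {β,γ} + {γ,α}` where `{α,β}` denotes the basis element
`single (α,β) 1` of the free `R`-module on pairs of cusps. -/
def msRel (T : G) : Submodule R ((CuspSet T × CuspSet T) →₀ R) :=
  Submodule.span R
    ({x | ∃ α, x = Finsupp.single (α, α) (1 : R)} ∪
      {x | ∃ α β γ, x = Finsupp.single (α, β) (1 : R) + Finsupp.single (β, γ) (1 : R) +
        Finsupp.single (γ, α) (1 : R)})

/-- The modular symbols module `M_R`: the free `R`-module on the symbols `{α,β}`,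
`α, β ∈ G/⟨T⟩`, modulo the relations `{α,α}` and `{α,β} + {β,γ} + {γ,α}`. -/
abbrev MSymb (T : G) := ((CuspSet T × CuspSet T) →₀ R) ⧸ msRel R T

/-- The `R`-module homomorphism `φ : R[G] → M_R` determined by
`g ↦ {g·0, g·∞} = {gσ⟨T⟩, g⟨T⟩}`. -/
def maninMap (σ T : G) : MonoidAlgebra R G →ₗ[R] MSymb R T :=
  (Finsupp.linearCombination R fun g : G =>
    Submodule.Quotient.mk
      (Finsupp.single ((QuotientGroup.mk (g * σ) : CuspSet T),
        (QuotientGroup.mk g : CuspSet T)) (1 : R))) ∘ₗ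
    (MonoidAlgebra.coeffLinearEquiv R).toLinearMap

namespace St9

variable {T : G}

lemma of_eq_single (g : G) : MonoidAlgebra.of R G g = MonoidAlgebra.single g (1 : R) := rfl

/-- The symbol `{α,β}` in `MSymb`. -/
def e (α β : CuspSet T) : MSymb R T :=
  Submodule.Quotient.mk (Finsupp.single (α, β) (1 : R))

lemma e_diag (α : CuspSet T) : e R α α = 0 := by
  rw [e, Submodule.Quotient.mk_eq_zero]
  exact Submodule.subset_span (Or.inl ⟨α, rfl⟩)

lemma e_tri (α β γ : CuspSet T) : e R α β + e R β γ + e R γ α = 0 := by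
  have : e R α β + e R β γ + e R γ α =
      Submodule.Quotient.mk (Finsupp.single (α, β) (1:R) + Finsupp.single (β, γ) (1:R) +
        Finsupp.single (γ, α) (1:R)) := by
    simp [e, Submodule.Quotient.mk_add]
  rw [this, Submodule.Quotient.mk_eq_zero]
  exact Submodule.subset_span (Or.inr ⟨α, β, γ, rfl⟩)

lemma e_rev (α β : CuspSet T) : e R β α = - e R α β := by
  have h := e_tri R α β α
  rw [e_diag, add_zero] at h
  exact eq_neg_of_add_eq_zero_right h

lemma e_split (α β γ : CuspSet T) : e R α β = e R α γ + e R γ β := by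
  have h := e_tri R α γ β
  rw [e_rev R α β, add_neg_eq_zero] at h
  exact h.symm

lemma e_chain (a : ℕ → CuspSet T) (m : ℕ) :
    ∑ i ∈ Finset.range m, e R (a i) (a (i + 1)) = e R (a 0) (a m) := by
  induction m with
  | zero => simp [e_diag]
  | succ m ih =>
    rw [Finset.sum_range_succ, ih, ← e_split]

lemma mk_mul_mem (x z : G) (hz : z ∈ Subgroup.zpowers T) :
    (QuotientGroup.mk (x * z) : CuspSet T) = QuotientGroup.mk x := by
  symm
  rw [QuotientGroup.eq]
  simpa using hz

end St9

namespace St9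
section Idl

variable (σ τ : G)

/-- The left ideal `R[G]N_σ + R[G]N_τ` as a submodule. -/
def Idl : Submodule R (MonoidAlgebra R G) :=
  LinearMap.range (LinearMap.mulRight R (Nelt R σ)) ⊔
    LinearMap.range (LinearMap.mulRight R (Nelt R τ))

lemma mem_Idl_left (x : MonoidAlgebra R G) : x * Nelt R σ ∈ Idl R σ τ :=
  le_sup_left (α := Submodule R (MonoidAlgebra R G)) ⟨x, rfl⟩

lemma mem_Idl_right (x : MonoidAlgebra R G) : x * Nelt R τ ∈ Idl R σ τ :=
  le_sup_right (α := Submodule R (MonoidAlgebra R G)) ⟨x, rfl⟩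

lemma Idl_mul_left (a : MonoidAlgebra R G) {x : MonoidAlgebra R G}
    (hx : x ∈ Idl R σ τ) : a * x ∈ Idl R σ τ := by
  rw [Idl, Submodule.mem_sup] at hx
  obtain ⟨y, ⟨u, rfl⟩, z, ⟨v, rfl⟩, rfl⟩ := hx
  rw [Idl, Submodule.mem_sup]
  refine ⟨a * u * Nelt R σ, ⟨a * u, rfl⟩, a * v * Nelt R τ, ⟨a * v, rfl⟩, ?_⟩
  simp only [LinearMap.mulRight_apply, mul_add, mul_assoc]

/-- `Q = R[G]/I`. -/
abbrev Qmod := MonoidAlgebra R G ⧸ Idl R σ τ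

/-- The projection `R[G] → Q`. -/
abbrev qp : MonoidAlgebra R G →ₗ[R] Qmod R σ τ := (Idl R σ τ).mkQ

/-- Left multiplication by `h` on `Q`. -/
def act (h : G) : Qmod R σ τ →ₗ[R] Qmod R σ τ :=
  Submodule.mapQ _ _ (LinearMap.mulLeft R (MonoidAlgebra.of R G h))
    (fun x hx => Idl_mul_left R σ τ _ hx)

lemma act_mk (h : G) (x : MonoidAlgebra R G) :
    act R σ τ h (qp R σ τ x) = qp R σ τ (MonoidAlgebra.of R G h * x) := by
  simp [act, qp, Submodule.mapQ_apply]

lemma act_one (q : Qmod R σ τ) : act R σ τ 1 q = q := by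
  obtain ⟨x, rfl⟩ := (Idl R σ τ).mkQ_surjective q
  rw [show (Idl R σ τ).mkQ x = qp R σ τ x from rfl, act_mk, map_one, one_mul]

lemma act_mul (g h : G) (q : Qmod R σ τ) :
    act R σ τ (g * h) q = act R σ τ g (act R σ τ h q) := by
  obtain ⟨x, rfl⟩ := (Idl R σ τ).mkQ_surjective q
  rw [show (Idl R σ τ).mkQ x = qp R σ τ x from rfl, act_mk, act_mk, act_mk,
    show MonoidAlgebra.of R G (g * h) = MonoidAlgebra.of R G g * MonoidAlgebra.of R G h from
      map_mul _ _ _, mul_assoc]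

/-- The semidirect product `Q ⋊ G` as a bare structure. -/
structure Hc (R : Type*) [CommRing R] {G : Type*} [Group G] (σ τ : G) where
  fst : Qmod R σ τ
  snd : G

instance : Group (Hc R σ τ) where
  mul x y := ⟨x.1 + act R σ τ x.2 y.1, x.2 * y.2⟩
  one := ⟨0, 1⟩
  inv x := ⟨-(act R σ τ x.2⁻¹ x.1), x.2⁻¹⟩
  mul_assoc := by
    rintro ⟨q1, g1⟩ ⟨q2, g2⟩ ⟨q3, g3⟩
    refine congrArg₂ Hc.mk ?_ (mul_assoc g1 g2 g3)
    show q1 + act R σ τ g1 q2 + act R σ τ (g1 * g2) q3 =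
      q1 + act R σ τ g1 (q2 + act R σ τ g2 q3)
    rw [map_add, act_mul, add_assoc]
  one_mul := by
    rintro ⟨q, g⟩
    refine congrArg₂ Hc.mk ?_ (one_mul g)
    show 0 + act R σ τ 1 q = q
    rw [act_one, zero_add]
  mul_one := by
    rintro ⟨q, g⟩
    refine congrArg₂ Hc.mk ?_ (mul_one g)
    show q + act R σ τ g 0 = q
    rw [map_zero, add_zero]
  inv_mul_cancel := by
    rintro ⟨q, g⟩
    refine congrArg₂ Hc.mk ?_ (inv_mul_cancel g)
    show -(act R σ τ g⁻¹ q) + act R σ τ g⁻¹ q = 0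
    rw [neg_add_cancel]

lemma Hc.mul_def (x y : Hc R σ τ) :
    x * y = ⟨x.1 + act R σ τ x.2 y.1, x.2 * y.2⟩ := rfl

lemma Hc.one_def : (1 : Hc R σ τ) = ⟨0, 1⟩ := rfl

/-- Projection `H →* G`. -/
def Hc.proj : Hc R σ τ →* G where
  toFun x := x.snd
  map_one' := rfl
  map_mul' _ _ := rfl

end Idl

section PowHom

variable {H : Type*} [Group H]

lemma hpow_congr (g : G) (h : H) (hh : h ^ orderOf g = 1) {a b : ℤ}
    (hab : g ^ a = g ^ b) : h ^ a = h ^ b := by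
  have h1 : g ^ (a - b) = 1 := by
    rw [zpow_sub, hab, mul_inv_cancel]
  obtain ⟨k, hk⟩ := orderOf_dvd_iff_zpow_eq_one.mpr h1
  have h2 : h ^ (a - b) = 1 := by
    rw [hk, zpow_mul, zpow_natCast, hh, one_zpow]
  calc h ^ a = h ^ (b + (a - b)) := by congr 1; ring
    _ = h ^ b * h ^ (a - b) := zpow_add h b (a - b)
    _ = h ^ b := by rw [h2, mul_one]

/-- The exponent of an element of `zpowers g`. -/
def cexp (g : G) (x : Subgroup.zpowers g) : ℤ :=
  (Subgroup.mem_zpowers_iff.mp x.2).choose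

lemma cexp_spec (g : G) (x : Subgroup.zpowers g) : g ^ cexp g x = (x : G) :=
  (Subgroup.mem_zpowers_iff.mp x.2).choose_spec

/-- Homomorphism from a cyclic subgroup determined by the image of the generator. -/
def powHom (g : G) (h : H) (hh : h ^ orderOf g = 1) : Subgroup.zpowers g →* H where
  toFun x := h ^ cexp g x
  map_one' := by
    show h ^ cexp g 1 = 1
    have : g ^ cexp g 1 = g ^ (0 : ℤ) := by rw [cexp_spec]; simp
    rw [hpow_congr g h hh this, zpow_zero]
  map_mul' x y := by
    show h ^ cexp g (x * y) = h ^ cexp g x * h ^ cexp g y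
    have : g ^ cexp g (x * y) = g ^ (cexp g x + cexp g y) := by
      rw [zpow_add, cexp_spec, cexp_spec, cexp_spec]; rfl
    rw [hpow_congr g h hh this, zpow_add]

lemma powHom_eq (g : G) (h : H) (hh : h ^ orderOf g = 1) (x : Subgroup.zpowers g)
    {k : ℤ} (hk : g ^ k = (x : G)) : powHom g h hh x = h ^ k := by
  have : g ^ cexp g x = g ^ k := by rw [cexp_spec, hk]
  exact hpow_congr g h hh this

end PowHom
end St9

namespace St9
section Coc

variable (σ τ : G)

lemma qp_eq_zero {x : MonoidAlgebra R G} (hx : x ∈ Idl R σ τ) : qp R σ τ x = 0 :=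
  (Submodule.Quotient.mk_eq_zero _).mpr hx

lemma Nelt_mul_of (g : G) : Nelt R g * MonoidAlgebra.of R G g = Nelt R g := by
  rcases Nat.eq_zero_or_pos (orderOf g) with h | h
  · simp [Nelt, h]
  · obtain ⟨m, hm⟩ := Nat.exists_eq_add_of_lt h
    rw [zero_add] at hm
    rw [Nelt, Finset.sum_mul]
    have h1 : ∀ i, MonoidAlgebra.of R G (g ^ i) * MonoidAlgebra.of R G g =
        MonoidAlgebra.of R G (g ^ (i + 1)) := by
      intro i; rw [← map_mul, pow_succ]
    simp only [h1]
    have h4 : MonoidAlgebra.of R G (g ^ (m + 1)) = MonoidAlgebra.of R G (g ^ 0) := by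
      rw [← hm, pow_orderOf_eq_one, pow_zero]
    rw [hm, Finset.sum_range_succ (fun i => MonoidAlgebra.of R G (g ^ (i + 1))) m,
      Finset.sum_range_succ' (fun i => MonoidAlgebra.of R G (g ^ i)) m]
    simp only [h4]

lemma Nelt_two (hσ : orderOf σ = 2) : Nelt R σ = 1 + MonoidAlgebra.of R G σ := by
  rw [Nelt, hσ, Finset.sum_range_succ, Finset.sum_range_one, pow_zero, pow_one, map_one]

lemma Hc_pow (x : MonoidAlgebra R G) (g : G) (k : ℕ) :
    (Hc.mk (σ := σ) (τ := τ) (qp R σ τ x) g) ^ k =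
      Hc.mk (qp R σ τ ((∑ i ∈ Finset.range k, MonoidAlgebra.of R G (g ^ i)) * x)) (g ^ k) := by
  induction k with
  | zero => simp only [pow_zero, Finset.range_zero, Finset.sum_empty, zero_mul, map_zero]; rfl
  | succ k ih =>
    rw [pow_succ, ih, Hc.mul_def]
    refine congrArg₂ Hc.mk ?_ (pow_succ g k).symm
    show qp R σ τ _ + act R σ τ (g ^ k) (qp R σ τ x) = _
    rw [act_mk, ← map_add, Finset.sum_range_succ, add_mul]

lemma sElt_pow : (Hc.mk (σ := σ) (τ := τ) (qp R σ τ 1) σ) ^ orderOf σ = 1 := by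
  rw [Hc_pow, mul_one, pow_orderOf_eq_one, ← Nelt,
    qp_eq_zero R σ τ (by simpa using mem_Idl_left R σ τ 1)]
  rfl

lemma tElt_pow (hσ : orderOf σ = 2) :
    (Hc.mk (σ := σ) (τ := τ) (qp R σ τ (MonoidAlgebra.of R G (τ * σ))) τ) ^ orderOf τ = 1 := by
  rw [Hc_pow, pow_orderOf_eq_one, ← Nelt]
  have hmem : Nelt R τ * MonoidAlgebra.of R G (τ * σ) ∈ Idl R σ τ := by
    rw [map_mul, ← mul_assoc, Nelt_mul_of]
    have : Nelt R τ * MonoidAlgebra.of R G σ = Nelt R τ * Nelt R σ - Nelt R τ := by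
      rw [Nelt_two R σ hσ, mul_add, mul_one, add_sub_cancel_left]
    rw [this]
    exact Submodule.sub_mem _ (mem_Idl_left R σ τ _) (by simpa using mem_Idl_right R σ τ 1)
  rw [qp_eq_zero R σ τ hmem]
  rfl

lemma exists_c (hσ : orderOf σ = 2)
    (hfree : Function.Bijective
      (Monoid.Coprod.lift (Subgroup.zpowers σ).subtype (Subgroup.zpowers τ).subtype)) :
    ∃ c : G → Qmod R σ τ,
      (∀ a b : G, c (a * b) = c a + act R σ τ a (c b)) ∧
      c σ = qp R σ τ 1 ∧
      c τ = qp R σ τ (MonoidAlgebra.of R G (τ * σ)) := by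
  set L := Monoid.Coprod.lift (Subgroup.zpowers σ).subtype (Subgroup.zpowers τ).subtype with hL
  set s : Hc R σ τ := Hc.mk (qp R σ τ 1) σ with hs
  set t : Hc R σ τ := Hc.mk (qp R σ τ (MonoidAlgebra.of R G (τ * σ))) τ with ht
  set fA := powHom σ s (sElt_pow R σ τ) with hfA
  set fB := powHom τ t (tElt_pow R σ τ hσ) with hfB
  set F0 := Monoid.Coprod.lift fA fB with hF0
  set iso := MulEquiv.ofBijective L hfree with hiso
  set f : G →* Hc R σ τ := F0.comp iso.symm.toMonoidHom with hf
  have hproj_s : ∀ k : ℤ, (s ^ k).snd = σ ^ k := fun k => map_zpow (Hc.proj R σ τ) s k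
  have hproj_t : ∀ k : ℤ, (t ^ k).snd = τ ^ k := fun k => map_zpow (Hc.proj R σ τ) t k
  have hF0snd : ∀ w, (F0 w).snd = L w := by
    intro w
    induction w using Monoid.Coprod.induction_on with
    | inl a =>
      rw [hF0, Monoid.Coprod.lift_apply_inl, hfA, powHom, MonoidHom.coe_mk, OneHom.coe_mk,
        hproj_s, cexp_spec]
      simp [hL]
    | inr b =>
      rw [hF0, Monoid.Coprod.lift_apply_inr, hfB, powHom, MonoidHom.coe_mk, OneHom.coe_mk,
        hproj_t, cexp_spec]
      simp [hL]
    | mul x y hx hy =>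
      rw [map_mul, map_mul]
      show (F0 x).snd * (F0 y).snd = L x * L y
      rw [hx, hy]
  have hfeq : ∀ g : G, f g = F0 (iso.symm g) := fun g => rfl
  have hsnd : ∀ g : G, (f g).snd = g := by
    intro g
    rw [hfeq, hF0snd]
    show iso (iso.symm g) = g
    exact iso.apply_symm_apply g
  have hisoinl : ∀ a : Subgroup.zpowers σ, iso.symm (a : G) = Monoid.Coprod.inl a := by
    intro a
    apply iso.injective
    rw [MulEquiv.apply_symm_apply]
    show L (Monoid.Coprod.inl a) = (a : G)
    rw [hL, Monoid.Coprod.lift_apply_inl]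
    rfl
  have hisoinr : ∀ b : Subgroup.zpowers τ, iso.symm (b : G) = Monoid.Coprod.inr b := by
    intro b
    apply iso.injective
    rw [MulEquiv.apply_symm_apply]
    show L (Monoid.Coprod.inr b) = (b : G)
    rw [hL, Monoid.Coprod.lift_apply_inr]
    rfl
  have hfσ : f σ = s := by
    rw [hfeq, hisoinl ⟨σ, Subgroup.mem_zpowers σ⟩, hF0, Monoid.Coprod.lift_apply_inl, hfA,
      powHom_eq σ s (sElt_pow R σ τ) _ (k := 1) (by simp), zpow_one]
  have hfτ : f τ = t := by
    rw [hfeq, hisoinr ⟨τ, Subgroup.mem_zpowers τ⟩, hF0, Monoid.Coprod.lift_apply_inr, hfB,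
      powHom_eq τ t (tElt_pow R σ τ hσ) _ (k := 1) (by simp), zpow_one]
  refine ⟨fun g => (f g).fst, ?_, ?_, ?_⟩
  · intro a b
    show (f (a * b)).fst = (f a).fst + act R σ τ a ((f b).fst)
    have h1 : f (a * b) = f a * f b := map_mul f a b
    rw [h1, Hc.mul_def]
    show (f a).fst + act R σ τ (f a).snd (f b).fst = _
    rw [hsnd]
  · show (f σ).fst = qp R σ τ 1
    rw [hfσ]
  · show (f τ).fst = qp R σ τ (MonoidAlgebra.of R G (τ * σ))
    rw [hfτ]

end Coc
end St9

namespace St9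
section KerLe

variable (σ τ T : G)

lemma ker_le_Idl (hσ : orderOf σ = 2) (hT : T = τ * σ)
    (hfree : Function.Bijective
      (Monoid.Coprod.lift (Subgroup.zpowers σ).subtype (Subgroup.zpowers τ).subtype)) :
    LinearMap.ker (maninMap R σ T) ≤ Idl R σ τ := by
  obtain ⟨c, hc, hcσ, hcτ⟩ := exists_c R σ τ hσ hfree
  have hcT : c T = 0 := by
    rw [hT, hc, hcτ, hcσ, act_mk, mul_one, ← map_add]
    apply qp_eq_zero
    have heq : MonoidAlgebra.of R G (τ * σ) + MonoidAlgebra.of R G τ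
        = MonoidAlgebra.of R G τ * Nelt R σ := by
      rw [Nelt_two R σ hσ, mul_add, mul_one, ← map_mul, add_comm]
    rw [heq]
    exact mem_Idl_left R σ τ _
  have hgT : ∀ g : G, c (g * T) = c g := fun g => by rw [hc, hcT, map_zero, add_zero]
  have hgTi : ∀ g : G, c (g * T⁻¹) = c g := by
    intro g
    conv_rhs => rw [← inv_mul_cancel_right g T]
    rw [hgT]
  have hgTz : ∀ (k : ℤ) (g : G), c (g * T ^ k) = c g := by
    intro k
    induction k using Int.induction_on with
    | zero => intro g; rw [zpow_zero, mul_one]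
    | succ i ih => intro g; rw [zpow_add_one, ← mul_assoc, hgT, ih]
    | pred i ih => intro g; rw [zpow_sub_one, ← mul_assoc, hgTi, ih]
  have hresp : ∀ a b : G, @Setoid.r _ (QuotientGroup.leftRel (Subgroup.zpowers T)) a b → c a = c b := by
    intro a b hab
    rw [QuotientGroup.leftRel_apply] at hab
    obtain ⟨k, hk⟩ := Subgroup.mem_zpowers_iff.mp hab
    have hb : b = a * T ^ k := by rw [hk, mul_inv_cancel_left]
    rw [hb, hgTz]
  set cbar : CuspSet T → Qmod R σ τ := fun α => Quotient.liftOn' α c hresp with hcbar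
  have hcbar_mk : ∀ g : G, cbar (QuotientGroup.mk g) = c g := fun g => rfl
  set χ₀ : ((CuspSet T × CuspSet T) →₀ R) →ₗ[R] Qmod R σ τ :=
    Finsupp.linearCombination R (fun p : CuspSet T × CuspSet T => cbar p.1 - cbar p.2) with hχ₀
  have hχ₀single : ∀ (p : CuspSet T × CuspSet T) (r : R),
      χ₀ (Finsupp.single p r) = r • (cbar p.1 - cbar p.2) := by
    intro p r; rw [hχ₀, Finsupp.linearCombination_single]
  have hrel : msRel R T ≤ LinearMap.ker χ₀ := by
    rw [msRel, Submodule.span_le]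
    rintro x (⟨α, rfl⟩ | ⟨α, β, γ, rfl⟩)
    · rw [SetLike.mem_coe, LinearMap.mem_ker, hχ₀single, sub_self, smul_zero]
    · rw [SetLike.mem_coe, LinearMap.mem_ker, map_add, map_add,
        hχ₀single, hχ₀single, hχ₀single, one_smul, one_smul, one_smul]
      abel
  set χ := Submodule.liftQ (msRel R T) χ₀ hrel with hχ
  have hcomp : χ.comp (maninMap R σ T) = (Idl R σ τ).mkQ := by
    refine MonoidAlgebra.lhom_ext' fun a => LinearMap.ext fun b => ?_
    show (χ.comp (maninMap R σ T)) (MonoidAlgebra.single a b) = (Idl R σ τ).mkQ (MonoidAlgebra.single a b)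
    rw [LinearMap.comp_apply, maninMap, LinearMap.comp_apply, LinearEquiv.coe_coe,
      MonoidAlgebra.coeffLinearEquiv_apply, MonoidAlgebra.coeff_single,
      Finsupp.linearCombination_single, map_smul, hχ,
      Submodule.liftQ_apply, hχ₀single, one_smul, hcbar_mk, hcbar_mk]
    have hca : c (a * σ) = c a + qp R σ τ (MonoidAlgebra.of R G a) := by
      rw [hc, hcσ, act_mk, mul_one]
    rw [hca, add_sub_cancel_left]
    have hsb : (MonoidAlgebra.single a b : MonoidAlgebra R G)
        = b • MonoidAlgebra.of R G a := by
      rw [of_eq_single, MonoidAlgebra.smul_single', mul_one]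
    rw [Submodule.mkQ_apply, hsb, map_smul]
    rfl
  intro x hx
  rw [LinearMap.mem_ker] at hx
  have h2 := LinearMap.congr_fun hcomp x
  rw [LinearMap.comp_apply, hx, map_zero] at h2
  rw [← Submodule.Quotient.mk_eq_zero (Idl R σ τ), ← Submodule.mkQ_apply, ← h2]

end KerLe
end St9

namespace St9
section IdlKer

variable (σ τ T : G)

lemma manin_single (a : G) (b : R) :
    maninMap R σ T (MonoidAlgebra.single a b) =
      b • e R (QuotientGroup.mk (a * σ)) (QuotientGroup.mk a) :=
  Finsupp.linearCombination_single (R := R) b a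

lemma Idl_le_ker (n : ℕ) (hn : 3 ≤ n) (hσ : orderOf σ = 2) (hτ : orderOf τ = n)
    (hT : T = τ * σ) :
    Idl R σ τ ≤ LinearMap.ker (maninMap R σ T) := by
  have hσ1 : σ * σ = 1 := by
    have h := pow_orderOf_eq_one σ; rwa [hσ, pow_two] at h
  have hτn : τ ^ n = 1 := by rw [← hτ]; exact pow_orderOf_eq_one τ
  rw [Idl, sup_le_iff]
  constructor
  · rw [LinearMap.range_le_ker_iff]
    refine MonoidAlgebra.lhom_ext' fun a => LinearMap.ext fun b => ?_
    show maninMap R σ T (MonoidAlgebra.single a b * Nelt R σ) = 0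
    rw [Nelt, Finset.mul_sum]
    have h1 : ∀ i : ℕ, MonoidAlgebra.single a b * MonoidAlgebra.of R G (σ ^ i)
        = MonoidAlgebra.single (a * σ ^ i) b := by
      intro i
      rw [of_eq_single, MonoidAlgebra.single_mul_single, mul_one]
    simp only [h1]
    rw [map_sum, hσ, Finset.sum_range_succ, Finset.sum_range_one, manin_single, manin_single,
      pow_zero, mul_one, pow_one]
    have h2 : a * σ * σ = a := by rw [mul_assoc, hσ1, mul_one]
    rw [h2, e_rev R (QuotientGroup.mk (a * σ) : CuspSet T) (QuotientGroup.mk a),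
      smul_neg, add_neg_cancel]
  · rw [LinearMap.range_le_ker_iff]
    refine MonoidAlgebra.lhom_ext' fun a => LinearMap.ext fun b => ?_
    show maninMap R σ T (MonoidAlgebra.single a b * Nelt R τ) = 0
    rw [Nelt, Finset.mul_sum]
    have h1 : ∀ i : ℕ, MonoidAlgebra.single a b * MonoidAlgebra.of R G (τ ^ i)
        = MonoidAlgebra.single (a * τ ^ i) b := by
      intro i
      rw [of_eq_single, MonoidAlgebra.single_mul_single, mul_one]
    simp only [h1]
    rw [map_sum, hτ]
    simp only [manin_single]
    set aa : ℕ → CuspSet T := fun i => QuotientGroup.mk (a * τ ^ (n - 1 + i)) with haa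
    have key1 : ∀ i : ℕ, (QuotientGroup.mk (a * τ ^ i * σ) : CuspSet T) = aa i := by
      intro i
      have hidx : n - 1 + i + 1 = n + i := by omega
      have h5 : a * τ ^ (n - 1 + i) * τ = a * τ ^ i := by
        rw [mul_assoc, ← pow_succ, hidx, pow_add, hτn, one_mul]
      have h6 : a * τ ^ i * σ = a * τ ^ (n - 1 + i) * T := by
        rw [hT, ← mul_assoc, h5]
      rw [h6, haa]
      exact mk_mul_mem _ _ (Subgroup.mem_zpowers T)
    have key2 : ∀ i : ℕ, (QuotientGroup.mk (a * τ ^ i) : CuspSet T) = aa (i + 1) := by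
      intro i
      have hidx : n - 1 + (i + 1) = n + i := by omega
      have h7 : a * τ ^ (n - 1 + (i + 1)) = a * τ ^ i := by
        rw [hidx, pow_add, hτn, one_mul]
      rw [haa]
      show _ = (QuotientGroup.mk (a * τ ^ (n - 1 + (i + 1))) : CuspSet T)
      rw [h7]
    simp only [key1, key2]
    rw [← Finset.smul_sum, e_chain R aa n]
    have h8 : aa n = aa 0 := by
      have h9 : a * τ ^ (n - 1 + n) = a * τ ^ (n - 1 + 0) := by
        rw [pow_add, pow_add, hτn, pow_zero]
      rw [haa]
      show (QuotientGroup.mk (a * τ ^ (n - 1 + n)) : CuspSet T) = _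
      rw [h9]
    rw [h8, e_diag, smul_zero]

end IdlKer
end St9

namespace St9
section Surj

lemma mulL_resp (T h : G) : ∀ a b : G,
    @Setoid.r _ (QuotientGroup.leftRel (Subgroup.zpowers T)) a b →
    @Setoid.r _ (QuotientGroup.leftRel (Subgroup.zpowers T)) (h * a) (h * b) := by
  intro a b hab
  rw [QuotientGroup.leftRel_apply] at hab ⊢
  have : (h * a)⁻¹ * (h * b) = a⁻¹ * b := by group
  rwa [this]

/-- Left multiplication by `h` on the cusp set. -/
def mulL (T h : G) : CuspSet T → CuspSet T :=
  Quotient.map' (fun g => h * g) (mulL_resp T h)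

lemma mulL_mk (T h g : G) :
    mulL T h (QuotientGroup.mk g) = QuotientGroup.mk (h * g) := rfl

variable (T : G)

def actM0 (h : G) : ((CuspSet T × CuspSet T) →₀ R) →ₗ[R] ((CuspSet T × CuspSet T) →₀ R) :=
  Finsupp.lmapDomain R R (Prod.map (mulL T h) (mulL T h))

lemma actM0_single (h : G) (p : CuspSet T × CuspSet T) (r : R) :
    actM0 R T h (Finsupp.single p r) =
      Finsupp.single (mulL T h p.1, mulL T h p.2) r := by
  rw [actM0, Finsupp.lmapDomain_apply, Finsupp.mapDomain_single]
  rfl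

lemma actM0_rel (h : G) : msRel R T ≤ (msRel R T).comap (actM0 R T h) := by
  rw [msRel, Submodule.span_le]
  rintro x (⟨α, rfl⟩ | ⟨α, β, γ, rfl⟩) <;>
    simp only [SetLike.mem_coe, Submodule.mem_comap, map_add, actM0_single]
  · exact Submodule.subset_span (Or.inl ⟨mulL T h α, rfl⟩)
  · exact Submodule.subset_span (Or.inr ⟨mulL T h α, mulL T h β, mulL T h γ, rfl⟩)

/-- The action of `h` on modular symbols. -/
def actM (h : G) : MSymb R T →ₗ[R] MSymb R T :=
  Submodule.mapQ _ _ (actM0 R T h) (actM0_rel R T h)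

lemma actM_e (h : G) (α β : CuspSet T) :
    actM R T h (e R α β) = e R (mulL T h α) (mulL T h β) := by
  rw [actM, e, e, Submodule.mapQ_apply, actM0_single]

lemma actM_manin (σ h : G) :
    (actM R T h).comp (maninMap R σ T) =
      (maninMap R σ T).comp (LinearMap.mulLeft R (MonoidAlgebra.of R G h)) := by
  refine MonoidAlgebra.lhom_ext' fun a => LinearMap.ext fun b => ?_
  show actM R T h (maninMap R σ T (MonoidAlgebra.single a b)) =
    maninMap R σ T (MonoidAlgebra.of R G h * MonoidAlgebra.single a b)
  rw [manin_single, map_smul, actM_e, mulL_mk, mulL_mk, of_eq_single,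
    MonoidAlgebra.single_mul_single, one_mul, manin_single, mul_assoc]

end Surj
end St9


open St9

/-- **Statement 9.** Let `G` be the free product of `⟨σ⟩ ≅ ℤ/2ℤ` and `⟨τ⟩ ≅ ℤ/nℤ` (`n ≥ 3`),
e.g. a Hecke triangle group, and `T = τσ`.  The `R`-module homomorphism `φ : R[G] → M_R`,
`g ↦ {gσ⟨T⟩, g⟨T⟩}`, is surjective with kernel `R[G]N_σ + R[G]N_τ`. -/
theorem statement9 (n : ℕ) (hn : 3 ≤ n) (σ τ : G)
    (hσ : orderOf σ = 2) (hτ : orderOf τ = n)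
    (hfree : Function.Bijective
      (Monoid.Coprod.lift (Subgroup.zpowers σ).subtype (Subgroup.zpowers τ).subtype))
    (T : G) (hT : T = τ * σ) :
    Function.Surjective (maninMap R σ T) ∧
    LinearMap.ker (maninMap R σ T) =
      LinearMap.range (LinearMap.mulRight R (Nelt R σ)) ⊔
        LinearMap.range (LinearMap.mulRight R (Nelt R τ)) := by
  constructor
  · -- surjectivity
    have hstab : ∀ (h : G) (y : MSymb R T), y ∈ LinearMap.range (maninMap R σ T) →
        actM R T h y ∈ LinearMap.range (maninMap R σ T) := by
      rintro h y ⟨x, rfl⟩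
      exact ⟨LinearMap.mulLeft R (MonoidAlgebra.of R G h) x,
        (LinearMap.congr_fun (actM_manin R T σ h) x).symm⟩
    have hgen : ∀ g : G, g ∈ Subgroup.closure ({σ, τ} : Set G) := by
      intro g
      obtain ⟨w, rfl⟩ := hfree.surjective g
      induction w using Monoid.Coprod.induction_on with
      | inl a =>
        rw [Monoid.Coprod.lift_apply_inl]
        have : (a : G) ∈ Subgroup.zpowers σ := a.2
        exact Subgroup.zpowers_le.mpr (Subgroup.subset_closure (by simp)) this
      | inr b =>
        rw [Monoid.Coprod.lift_apply_inr]
        have : (b : G) ∈ Subgroup.zpowers τ := b.2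
        exact Subgroup.zpowers_le.mpr (Subgroup.subset_closure (by simp)) this
      | mul x y hx hy =>
        rw [map_mul]
        exact mul_mem hx hy
    have key : ∀ g : G, e R (QuotientGroup.mk g : CuspSet T) (QuotientGroup.mk 1) ∈
        LinearMap.range (maninMap R σ T) := by
      intro g
      refine Subgroup.closure_induction ?_ ?_ ?_ ?_ (hgen g)
      · rintro x (rfl | rfl)
        · refine ⟨MonoidAlgebra.single (1 : G) (1 : R), ?_⟩
          rw [manin_single, one_mul, one_smul]
        · refine ⟨-MonoidAlgebra.single x (1 : R), ?_⟩
          rw [map_neg, manin_single, one_smul]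
          have hTmk : (QuotientGroup.mk (x * σ) : CuspSet T) = QuotientGroup.mk 1 := by
            rw [show x * σ = 1 * T by rw [one_mul, hT]]
            exact mk_mul_mem 1 T (Subgroup.mem_zpowers T)
          rw [hTmk]
          exact (e_rev R (QuotientGroup.mk 1) (QuotientGroup.mk x)).symm
      · have := e_diag R (QuotientGroup.mk 1 : CuspSet T)
        rw [this]
        exact Submodule.zero_mem _
      · intro x y hx hy px py
        rw [e_split R (QuotientGroup.mk (x * y)) (QuotientGroup.mk 1) (QuotientGroup.mk x)]
        refine add_mem ?_ px
        have h3 : e R (QuotientGroup.mk (x * y) : CuspSet T) (QuotientGroup.mk x) =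
            actM R T x (e R (QuotientGroup.mk y) (QuotientGroup.mk 1)) := by
          rw [actM_e, mulL_mk, mulL_mk, mul_one]
        rw [h3]
        exact hstab x _ py
      · intro x hx px
        have h4 : e R (QuotientGroup.mk x⁻¹ : CuspSet T) (QuotientGroup.mk 1) =
            - actM R T x⁻¹ (e R (QuotientGroup.mk x) (QuotientGroup.mk 1)) := by
          rw [actM_e, mulL_mk, mulL_mk, inv_mul_cancel, mul_one]
          exact e_rev R (QuotientGroup.mk 1) (QuotientGroup.mk x⁻¹)
        rw [h4]
        exact neg_mem (hstab x⁻¹ _ px)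
    rw [← LinearMap.range_eq_top, eq_top_iff]
    rintro y -
    obtain ⟨x, rfl⟩ := Submodule.Quotient.mk_surjective (msRel R T) y
    induction x using Finsupp.induction_linear with
    | zero =>
      rw [Submodule.Quotient.mk_zero]
      exact Submodule.zero_mem _
    | add f g hf hg =>
      rw [Submodule.Quotient.mk_add]
      exact add_mem hf hg
    | single p r =>
      obtain ⟨α, β⟩ := p
      have h1 : (Submodule.Quotient.mk (Finsupp.single (α, β) r) : MSymb R T) =
          r • e R α β := by
        rw [e, ← Submodule.Quotient.mk_smul, Finsupp.smul_single', mul_one]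
      rw [h1]
      obtain ⟨ga, rfl⟩ := QuotientGroup.mk_surjective α
      obtain ⟨gb, rfl⟩ := QuotientGroup.mk_surjective β
      have h2 : e R (QuotientGroup.mk ga : CuspSet T) (QuotientGroup.mk gb) =
          e R (QuotientGroup.mk ga) (QuotientGroup.mk 1) -
            e R (QuotientGroup.mk gb) (QuotientGroup.mk 1) := by
        rw [e_split R (QuotientGroup.mk ga) (QuotientGroup.mk gb) (QuotientGroup.mk 1),
          e_rev R (QuotientGroup.mk gb) (QuotientGroup.mk 1)]
        abel
      rw [h2]
      exact Submodule.smul_mem _ _ (sub_mem (key ga) (key gb))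
  · show LinearMap.ker (maninMap R σ T) = Idl R σ τ
    exact le_antisymm (ker_le_Idl R σ τ T hσ hT hfree)
      (Idl_le_ker R σ τ T n hn hσ hτ hT)
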